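/- (Generalization in the RKHS) Assume the kernel k is unitary with respect to G. Let (x_i, y_i), i = 1,…,N, be a finite dataset with x_i ∈ E and y_i ∈ {−1,+1}, let ρ' > 0, and let w = Σ_{j=1}^N c_j Φ(x_j) for some coefficients c_j ∈ ℝ. If y_i ⟨Φ(x_i), w⟩ ≥ ρ' for all i, then y_i ⟨φ(g x_i), w⟩ ≥ ρ' for all i and for every g ∈ G; that is, w is a separator of the full G-transformed dataset in feature space with margin at least ρ'. -/

import Mathlib

open MeasureTheory RealInnerProductSpace

/-- Generalization in the RKHS: for a unitary kernel, if
`w = Σ_j c_j Φ(x_j)` (with `Φ` the group-averaged feature map) separates the averaged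
data with margin `ρ'`, i.e. `y i * ⟪Φ(xᵢ), w⟫ ≥ ρ'` for all `i`, then
`y i * ⟪φ(g xᵢ), w⟫ ≥ ρ'` for all `i` and all `g ∈ G`. -/
theorem generalization_RKHS
    {E : Type*} [NormedAddCommGroup E] [InnerProductSpace ℝ E] [FiniteDimensional ℝ E]
    {G : Type*} [Group G] [TopologicalSpace G] [IsTopologicalGroup G] [CompactSpace G]
    [MeasurableSpace G] [BorelSpace G]
    (μ : Measure G) [IsProbabilityMeasure μ] [μ.IsMulLeftInvariant] [μ.IsMulRightInvariant]
    [μ.IsInvInvariant]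
    (ρ : G →* (E ≃ₗᵢ[ℝ] E)) (hρ : Continuous fun p : G × E => ρ p.1 p.2)
    {H : Type*} [NormedAddCommGroup H] [InnerProductSpace ℝ H] [CompleteSpace H]
    (φ : E → H) (hφ : Continuous φ)
    (hunitary : ∀ (g : G) (x y : E), ⟪φ (ρ g x), φ (ρ g y)⟫ = ⟪φ x, φ y⟫)
    (Φ : E → H) (hΦ : ∀ x : E, Φ x = ∫ g, φ (ρ g x) ∂μ)
    (N : ℕ) (x : Fin N → E) (y : Fin N → ℝ) (hy : ∀ i, y i = 1 ∨ y i = -1)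
    (c : Fin N → ℝ) (w : H) (hw : w = ∑ j, c j • Φ (x j))
    (ρ' : ℝ) (hρ' : 0 < ρ')
    (hsep : ∀ i, ρ' ≤ y i * ⟪Φ (x i), w⟫) :
    ∀ (i : Fin N) (g : G), ρ' ≤ y i * ⟪φ (ρ g (x i)), w⟫ := by
  have hcont : ∀ z : E, Continuous fun h : G => φ (ρ h z) := fun z =>
    hφ.comp (hρ.comp (Continuous.prodMk continuous_id continuous_const))
  have hint : ∀ z : E, Integrable (fun h : G => φ (ρ h z)) μ := fun z =>
    (hcont z).integrable_of_hasCompactSupport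
      (HasCompactSupport.of_compactSpace _)
  -- key: ⟪φ (ρ g x), Φ z⟫ = ⟪Φ x, Φ z⟫
  have key : ∀ (g : G) (a z : E), ⟪φ (ρ g a), Φ z⟫ = ⟪Φ a, Φ z⟫ := by
    intro g a z
    have hconst : ∀ g : G, ⟪φ (ρ g a), Φ z⟫ = ∫ h, ⟪φ a, φ (ρ h z)⟫ ∂μ := by
      intro g
      rw [hΦ z, ← integral_inner (hint z)]
      have hmul : ∀ (g h : G) (v : E), ρ g (ρ h v) = ρ (g * h) v := by
        intro g h v; rw [map_mul]; rfl
      have : ∀ h : G, ⟪φ (ρ g a), φ (ρ h z)⟫ = ⟪φ a, φ (ρ (g⁻¹ * h) z)⟫ := by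
        intro h
        have h1 := hunitary g⁻¹ (ρ g a) (ρ h z)
        rw [hmul, hmul, inv_mul_cancel] at h1
        simpa [map_one] using h1.symm
      simp_rw [this]
      exact integral_mul_left_eq_self (fun h => ⟪φ a, φ (ρ h z)⟫) g⁻¹
    have h2 : ⟪Φ a, Φ z⟫ = ∫ g', ⟪φ (ρ g' a), Φ z⟫ ∂μ := by
      rw [real_inner_comm, hΦ a, ← integral_inner (hint a)]
      exact integral_congr_ae (Filter.Eventually.of_forall fun g' => real_inner_comm _ _)
    rw [h2]
    simp_rw [hconst]
    rw [integral_const, probReal_univ, one_smul]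
  intro i g
  have heq : ⟪φ (ρ g (x i)), w⟫ = ⟪Φ (x i), w⟫ := by
    rw [hw]
    simp_rw [inner_sum, real_inner_smul_right, key]
  rw [heq]; exact hsep i
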